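/- Let n ≥ 3 be odd and let μ ∈ ℝ satisfy a_{(n−1)/2}(μ) = a_{(n−3)/2}(μ). Then a_{n−1}(μ) = 0 and a_{n−2}(μ) = 1. -/
import Mathlib


noncomputable def a (μ : ℝ) : ℕ → ℝ
  | 0 => 1
  | 1 => 2 * (1 - μ)
  | n + 2 => 2 * (1 - μ) * a μ (n + 1) - a μ n

lemma a_add (μ : ℝ) (p q : ℕ) :
    a μ (p + q + 2) = a μ (p + 1) * a μ (q + 1) - a μ p * a μ q := by
  induction q using Nat.twoStepInduction generalizing p with
  | zero => simp [a]; ring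
  | one =>
      show a μ (p + 3) = _
      have h3 : p + 3 = (p + 1) + 2 := by ring
      rw [h3]
      simp only [a]
      ring
  | more q ih1 ih2 =>
      have h4 : p + (q + 2) + 2 = (p + q + 2) + 2 := by ring
      rw [h4]
      show 2 * (1 - μ) * a μ (p + q + 2 + 1) - a μ (p + q + 2) = _
      have e1 : p + q + 2 + 1 = p + (q + 1) + 2 := by ring
      rw [e1, ih1, ih2]
      show _ = a μ (p+1) * (2 * (1 - μ) * a μ (q + 1 + 1) - a μ (q+1)) -
        a μ p * (2 * (1 - μ) * a μ (q + 1) - a μ q)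
      ring

lemma a_cassini (μ : ℝ) (n : ℕ) :
    a μ (n + 1) ^ 2 - a μ (n + 2) * a μ n = 1 := by
  induction n with
  | zero => simp [a]; ring
  | succ n ih =>
      show a μ (n + 2) ^ 2 - a μ (n + 3) * a μ (n + 1) = 1
      have h3 : a μ (n + 3) = 2 * (1 - μ) * a μ (n + 2) - a μ (n + 1) := rfl
      have h2 : a μ (n + 2) = 2 * (1 - μ) * a μ (n + 1) - a μ n := rfl
      rw [h2] at ih
      rw [h3, h2]
      linear_combination ih

theorem stmt10 (n : ℕ) (hn : 3 ≤ n) (hodd : Odd n) (μ : ℝ)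
    (h : a μ ((n - 1) / 2) = a μ ((n - 3) / 2)) :
    a μ (n - 1) = 0 ∧ a μ (n - 2) = 1 := by
  obtain ⟨k, rfl⟩ := hodd
  have hk : 1 ≤ k := by omega
  have e1 : (2 * k + 1 - 1) / 2 = k := by omega
  have e2 : (2 * k + 1 - 3) / 2 = k - 1 := by omega
  have e3 : 2 * k + 1 - 1 = 2 * k := by omega
  have e4 : 2 * k + 1 - 2 = 2 * k - 1 := by omega
  rw [e1, e2] at h
  rw [e3, e4]
  rcases Nat.lt_or_ge k 2 with hk2 | hk2
  · interval_cases k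
    simp [a] at h ⊢
    constructor <;> nlinarith [h]
  · obtain ⟨j, rfl⟩ : ∃ j, k = j + 2 := ⟨k - 2, by omega⟩
    have hadd1 : a μ (2 * (j + 2)) = a μ (j+2) * a μ (j+2) - a μ (j+1) * a μ (j+1) := by
      have := a_add μ (j+1) (j+1)
      convert this using 2
      omega
    have hadd2 : a μ (2 * (j + 2) - 1) = a μ (j+2) * a μ (j+1) - a μ (j+1) * a μ j := by
      have := a_add μ (j+1) j
      convert this using 2 <;> omega
    have hcas := a_cassini μ j
    have hh : a μ (j + 2) = a μ (j + 1) := by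
      have : (j + 2) - 1 = j + 1 := by omega
      rw [this] at h; exact h
    constructor
    · rw [hadd1, hh]; ring
    · rw [hadd2, hh]
      rw [hh] at hcas
      linear_combination hcas
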